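/- Let n ≥ 1, let 0 < a < b be real numbers, let N ∈ ℕ, and let l, l', l'' ∈ {1,…,n}. For every Schwartz function ψ : ℝⁿ → ℂ whose Fourier transform 𝓕ψ vanishes at every ξ with ‖ξ‖ < a or ‖ξ‖ > b, there exist constants C > 0 and c > 0 such that for every t ≥ 0 and every x ∈ ℝⁿ: |∫_{ℝⁿ} e^{−t‖ξ‖²} · (ξ_l ξ_{l'} ξ_{l''} / ‖ξ‖²) · (𝓕ψ)(ξ) e^{2πi⟨x,ξ⟩} dξ| ≤ C · e^{−c t} · (1 + ‖x‖)^{−N}. (That is, the operator e^{tΔ}∂_{x_l}∂_{x_{l'}}∂_{x_{l''}}(−Δ)^{−1}, realized as a Fourier multiplier, applied to a frequency-annulus-localized Schwartz function decays exponentially in time and polynomially in space.) -/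

import Mathlib

open MeasureTheory

open scoped ContDiff FourierTransform RealInnerProductSpace


lemma iter_id_two_le {E : Type*} [NormedAddCommGroup E] [NormedSpace ℝ E]
    {j : ℕ} (hj : 2 ≤ j) (x : E) : ‖iteratedFDeriv ℝ j (fun y : E => y) x‖ = 0 := by
  obtain ⟨i, rfl⟩ : ∃ i, j = (i + 1) + 1 := ⟨j - 2, by omega⟩
  rw [← norm_iteratedFDeriv_fderiv]
  have : (fderiv ℝ (fun y : E => y)) = fun _ => ContinuousLinearMap.id ℝ E := by
    funext z; exact fderiv_id'
  rw [this, iteratedFDeriv_const_of_ne (by omega)]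
  simp

lemma iter_id_one {E : Type*} [NormedAddCommGroup E] [NormedSpace ℝ E]
    (x : E) : ‖iteratedFDeriv ℝ 1 (fun y : E => y) x‖ ≤ 1 := by
  rw [show (1 : ℕ) = 0 + 1 from rfl, ← norm_iteratedFDeriv_fderiv, norm_iteratedFDeriv_zero]
  have : (fderiv ℝ (fun y : E => y)) x = ContinuousLinearMap.id ℝ E := fderiv_id'
  rw [this]
  exact ContinuousLinearMap.norm_id_le

lemma iter_smul_norm {E : Type*} [NormedAddCommGroup E] [NormedSpace ℝ E]
    (t : ℝ) (j : ℕ) (x : E) :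
    ‖iteratedFDeriv ℝ j (fun y : E => t • y) x‖ = |t| * ‖iteratedFDeriv ℝ j (fun y : E => y) x‖ := by
  have : iteratedFDeriv ℝ j (fun y : E => t • y) x = t • iteratedFDeriv ℝ j (fun y : E => y) x :=
    iteratedFDeriv_const_smul_apply contDiff_id.contDiffAt
  rw [this]
  rw [norm_smul t (iteratedFDeriv ℝ j (fun y : E => y) x), Real.norm_eq_abs]

/-- Derivatives of `y ↦ t * ‖y‖ ^ 2` bound. -/
lemma normsq_deriv_bound {E : Type*} [NormedAddCommGroup E] [InnerProductSpace ℝ E]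
    {t b' : ℝ} (ht : 0 ≤ t) {ξ : E} (hξb : ‖ξ‖ ≤ b') (i : ℕ) (hi : 1 ≤ i) :
    ‖iteratedFDeriv ℝ i (fun y : E => t * ‖y‖ ^ 2) ξ‖ ≤ (max 1 (2 * t * (b' + 1))) ^ i := by
  have hb0 : (0:ℝ) ≤ b' := le_trans (norm_nonneg ξ) hξb
  set D : ℝ := max 1 (2 * t * (b' + 1)) with hD
  have hD1 : (1:ℝ) ≤ D := le_max_left _ _
  have hD0 : (0:ℝ) ≤ D := by linarith
  have hfun : (fun y : E => t * ‖y‖ ^ 2) = fun y : E => (innerSL ℝ) ((fun z : E => t • z) y) ((fun z : E => z) y) := by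
    funext y
    simp only [innerSL_apply_apply, real_inner_smul_left, real_inner_self_eq_norm_sq]
  have hsmooth₁ : ContDiff ℝ ∞ (fun z : E => t • z) := contDiff_const.smul contDiff_id
  have hsmooth₂ : ContDiff ℝ ∞ (fun z : E => z) := contDiff_id
  rw [hfun]
  refine le_trans ((innerSL ℝ).norm_iteratedFDeriv_le_of_bilinear hsmooth₁ hsmooth₂ ξ (by exact_mod_cast le_top)) ?_
  have hB : ‖(innerSL ℝ (E := E))‖ ≤ 1 := norm_innerSL_le ℝ
  -- bound the sum
  have hsum : ∑ j ∈ Finset.range (i + 1), (i.choose j : ℝ) *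
      ‖iteratedFDeriv ℝ j (fun z : E => t • z) ξ‖ *
      ‖iteratedFDeriv ℝ (i - j) (fun z : E => z) ξ‖ ≤ D ^ i := by
    have hA0 : ‖iteratedFDeriv ℝ 0 (fun z : E => t • z) ξ‖ ≤ t * b' := by
      rw [norm_iteratedFDeriv_zero, norm_smul, Real.norm_eq_abs, abs_of_nonneg ht]
      exact mul_le_mul_of_nonneg_left hξb ht
    have hA1 : ‖iteratedFDeriv ℝ 1 (fun z : E => t • z) ξ‖ ≤ t := by
      rw [iter_smul_norm, abs_of_nonneg ht]
      calc t * ‖iteratedFDeriv ℝ 1 (fun y : E => y) ξ‖ ≤ t * 1 :=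
            mul_le_mul_of_nonneg_left (iter_id_one ξ) ht
        _ = t := mul_one t
    have hA2 : ∀ j, 2 ≤ j → ‖iteratedFDeriv ℝ j (fun z : E => t • z) ξ‖ = 0 := by
      intro j hj
      rw [iter_smul_norm, iter_id_two_le hj, mul_zero]
    have hB0 : ‖iteratedFDeriv ℝ 0 (fun z : E => z) ξ‖ ≤ b' := by
      rw [norm_iteratedFDeriv_zero]; exact hξb
    have hDt : 2 * t * (b' + 1) ≤ D := le_max_right _ _
    rcases Nat.lt_or_ge i 3 with h3 | h3
    · interval_cases i
      · rw [Finset.sum_range_succ, Finset.sum_range_one]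
        have e1 : ‖iteratedFDeriv ℝ 0 (fun z : E => t • z) ξ‖ *
            ‖iteratedFDeriv ℝ (1 - 0) (fun z : E => z) ξ‖ ≤ t * b' * 1 :=
          mul_le_mul hA0 (iter_id_one ξ) (norm_nonneg _) (by positivity)
        have e2 : ‖iteratedFDeriv ℝ 1 (fun z : E => t • z) ξ‖ *
            ‖iteratedFDeriv ℝ (1 - 1) (fun z : E => z) ξ‖ ≤ t * b' :=
          mul_le_mul hA1 hB0 (norm_nonneg _) ht
        simp only [Nat.choose_zero_right, Nat.choose_one_right, Nat.cast_one, one_mul, pow_one]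
        have : (1 : ℝ) * (‖iteratedFDeriv ℝ 1 (fun z : E => t • z) ξ‖ *
            ‖iteratedFDeriv ℝ (1 - 1) (fun z : E => z) ξ‖) ≤ t * b' := by
          rw [one_mul]; exact e2
        nlinarith [norm_nonneg (iteratedFDeriv ℝ 0 (fun z : E => t • z) ξ),
          norm_nonneg (iteratedFDeriv ℝ (1-0) (fun z : E => z) ξ), e1, e2]
      · rw [Finset.sum_range_succ, Finset.sum_range_succ, Finset.sum_range_one]
        have e0 : ‖iteratedFDeriv ℝ (2 - 0) (fun z : E => z) ξ‖ = 0 := iter_id_two_le (by norm_num) ξ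
        have e2 : ‖iteratedFDeriv ℝ 2 (fun z : E => t • z) ξ‖ = 0 := hA2 2 le_rfl
        have e1 : ‖iteratedFDeriv ℝ 1 (fun z : E => t • z) ξ‖ *
            ‖iteratedFDeriv ℝ (2 - 1) (fun z : E => z) ξ‖ ≤ t * 1 :=
          mul_le_mul hA1 (iter_id_one ξ) (norm_nonneg _) ht
        rw [e0, e2]
        simp only [Nat.choose_zero_right, Nat.choose_one_right, Nat.choose_self, Nat.cast_one,
          Nat.cast_ofNat, mul_zero, zero_mul, one_mul, add_zero, zero_add]
        have hD2 : 2 * t ≤ D ^ 2 := by nlinarith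
        nlinarith [e1]
    · have : ∑ j ∈ Finset.range (i + 1), (i.choose j : ℝ) *
          ‖iteratedFDeriv ℝ j (fun z : E => t • z) ξ‖ *
          ‖iteratedFDeriv ℝ (i - j) (fun z : E => z) ξ‖ = 0 := by
        apply Finset.sum_eq_zero
        intro j hj
        rcases le_or_gt 2 j with h2 | h2
        · rw [hA2 j h2, mul_zero, zero_mul]
        · rw [iter_id_two_le (by omega) ξ, mul_zero]
      rw [this]
      positivity
  calc ‖(innerSL ℝ (E := E))‖ * ∑ j ∈ Finset.range (i + 1), (i.choose j : ℝ) *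
      ‖iteratedFDeriv ℝ j (fun z : E => t • z) ξ‖ *
      ‖iteratedFDeriv ℝ (i - j) (fun z : E => z) ξ‖ ≤ 1 * (D ^ i) := by
        apply mul_le_mul hB hsum (Finset.sum_nonneg fun j _ => by positivity) zero_le_one
    _ = D ^ i := one_mul _


lemma exp_iterated (i : ℕ) (y : ℝ) :
    ‖iteratedFDeriv ℝ i (fun s : ℝ => Real.exp ((-1) * s)) y‖ = Real.exp (-y) := by
  rw [norm_iteratedFDeriv_eq_norm_iteratedDeriv, iteratedDeriv_exp_const_mul i (-1)]
  simp [abs_of_nonneg (Real.exp_pos _).le, abs_pow]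

lemma gauss_bound {E : Type*} [NormedAddCommGroup E] [InnerProductSpace ℝ E]
    {t b' : ℝ} (ht : 0 ≤ t) (m : ℕ) {ξ : E} (hξb : ‖ξ‖ ≤ b')
    (hnsq : ∀ i, 1 ≤ i → ‖iteratedFDeriv ℝ i (fun y : E => t * ‖y‖ ^ 2) ξ‖ ≤
      (max 1 (2 * t * (b' + 1))) ^ i) :
    ‖iteratedFDeriv ℝ m (fun y : E => Real.exp (-(t * ‖y‖ ^ 2))) ξ‖ ≤
      (m.factorial : ℝ) * Real.exp (-(t * ‖ξ‖ ^ 2)) * (max 1 (2 * t * (b' + 1))) ^ m := by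
  have hg : ContDiff ℝ ∞ (fun s : ℝ => Real.exp ((-1) * s)) :=
    Real.contDiff_exp.comp (contDiff_const.mul contDiff_id)
  have hf : ContDiff ℝ ∞ (fun y : E => t * ‖y‖ ^ 2) :=
    contDiff_const.mul (contDiff_norm_sq ℝ)
  have hcomp : (fun y : E => Real.exp (-(t * ‖y‖ ^ 2))) =
      (fun s : ℝ => Real.exp ((-1) * s)) ∘ (fun y : E => t * ‖y‖ ^ 2) := by
    funext y; simp [Function.comp]
  rw [hcomp]
  exact norm_iteratedFDeriv_comp_le hg hf (by exact_mod_cast le_top) ξ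
    (fun i _ => by rw [exp_iterated])
    (fun i hi1 _ => hnsq i hi1)


lemma poly_le_exp (c ε : ℝ) (hc : 0 ≤ c) (hε : 0 < ε) (m : ℕ) :
    ∃ K : ℝ, 0 < K ∧ ∀ t : ℝ, 0 ≤ t → (1 + c * t) ^ m ≤ K * Real.exp (ε * t) := by
  rcases Nat.eq_zero_or_pos m with rfl | hm
  · exact ⟨1, one_pos, fun t ht => by simp [Real.exp_pos, (Real.exp_pos _).le,
      Real.one_le_exp (by positivity : (0:ℝ) ≤ ε * t)]⟩
  set A : ℝ := max 1 (c * m / ε) with hA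
  have hA1 : (1:ℝ) ≤ A := le_max_left _ _
  have hA0 : (0:ℝ) < A := lt_of_lt_of_le one_pos hA1
  refine ⟨A ^ m, by positivity, fun t ht => ?_⟩
  have key : 1 + c * t ≤ A * Real.exp (ε * t / m) := by
    have h1 : 1 + ε * t / m ≤ Real.exp (ε * t / m) := Real.add_one_le_exp _ |>.trans_eq' (by ring)
    have h2 : A * (1 + ε * t / m) ≤ A * Real.exp (ε * t / m) :=
      mul_le_mul_of_nonneg_left h1 hA0.le
    refine le_trans ?_ h2
    have h3 : c * m / ε ≤ A := le_max_right _ _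
    have hm0 : (0:ℝ) < m := by exact_mod_cast hm
    have : c * t ≤ A * (ε * t / m) := by
      have : (c * m / ε) * (ε * t / m) = c * t := by field_simp
      calc c * t = (c * m / ε) * (ε * t / m) := this.symm
        _ ≤ A * (ε * t / m) := mul_le_mul_of_nonneg_right h3 (by positivity)
    nlinarith
  calc (1 + c * t) ^ m ≤ (A * Real.exp (ε * t / m)) ^ m := by
        apply pow_le_pow_left₀ (by positivity) key m
    _ = A ^ m * Real.exp (ε * t / m) ^ m := mul_pow _ _ _
    _ = A ^ m * Real.exp (ε * t) := by
        rw [← Real.exp_nat_mul]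
        congr 1
        field_simp

lemma key_seminorm_bound {E : Type*} [NormedAddCommGroup E] [InnerProductSpace ℝ E]
    {h : E → ℂ} (hsmooth : ContDiff ℝ ∞ h) {a b : ℝ} (ha : 0 < a) (hab : a ≤ b)
    (hsupp : ∀ ξ : E, ξ ∈ tsupport h → a ≤ ‖ξ‖ ∧ ‖ξ‖ ≤ b)
    (hM : ∀ j : ℕ, ∃ M : ℝ, 0 ≤ M ∧ ∀ ξ : E, ‖iteratedFDeriv ℝ j h ξ‖ ≤ M)
    (k m : ℕ) :
    ∃ C : ℝ, 0 < C ∧ ∀ t : ℝ, 0 ≤ t → ∀ ξ : E,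
      ‖ξ‖ ^ k * ‖iteratedFDeriv ℝ m (fun y => Real.exp (-(t * ‖y‖ ^ 2)) • h y) ξ‖ ≤
        C * Real.exp (-(a ^ 2 / 2 * t)) := by
  -- a single bound for all derivatives of `h` up to order `m`
  choose Mf hMf0 hMf using hM
  set M : ℝ := ∑ j ∈ Finset.range (m + 1), Mf j with hMdef
  have hM0 : 0 ≤ M := Finset.sum_nonneg fun j _ => hMf0 j
  have hMle : ∀ j, j ≤ m → ∀ ξ : E, ‖iteratedFDeriv ℝ j h ξ‖ ≤ M := by
    intro j hj ξ
    refine (hMf j ξ).trans ?_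
    exact Finset.single_le_sum (fun i _ => hMf0 i) (Finset.mem_range.mpr (by omega))
  obtain ⟨K, hK0, hK⟩ := poly_le_exp (2 * (b + 1)) (a ^ 2 / 2) (by nlinarith) (by positivity) m
  set C₀ : ℝ := (max 1 b) ^ k * 2 ^ m * ((m.factorial : ℝ) * M * K) with hC₀def
  have hC₀0 : 0 ≤ C₀ := by positivity
  refine ⟨C₀ + 1, by positivity, fun t ht ξ => ?_⟩
  by_cases hξ : ξ ∈ tsupport h
  · obtain ⟨haξ, hbξ⟩ := hsupp ξ hξ
    set D : ℝ := max 1 (2 * t * (b + 1)) with hDdef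
    have hD1 : (1:ℝ) ≤ D := le_max_left _ _
    have hφ : ContDiff ℝ ∞ (fun y : E => Real.exp (-(t * ‖y‖ ^ 2))) :=
      Real.contDiff_exp.comp (contDiff_const.mul (contDiff_norm_sq ℝ)).neg
    have hsmul := norm_iteratedFDeriv_smul_le (𝕜 := ℝ) (n := m) hφ hsmooth ξ
      (by exact_mod_cast le_top)
    have hX : Real.exp (-(t * ‖ξ‖ ^ 2)) ≤ Real.exp (-(t * a ^ 2)) := by
      apply Real.exp_le_exp.mpr
      have : a ^ 2 ≤ ‖ξ‖ ^ 2 := by nlinarith [ha.le, haξ]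
      nlinarith [ht]
    have hDK : D ^ m ≤ K * Real.exp (a ^ 2 / 2 * t) := by
      have hD' : D ≤ 1 + 2 * (b + 1) * t := by
        apply max_le
        · nlinarith [ht, (by nlinarith : (0:ℝ) ≤ b + 1)]
        · nlinarith [ht, (by nlinarith : (0:ℝ) ≤ b + 1)]
      calc D ^ m ≤ (1 + 2 * (b + 1) * t) ^ m :=
            pow_le_pow_left₀ (by linarith) hD' m
        _ ≤ K * Real.exp (a ^ 2 / 2 * t) := hK t ht
    have hterm : ∀ i ∈ Finset.range (m + 1),
        (m.choose i : ℝ) * ‖iteratedFDeriv ℝ i (fun y : E => Real.exp (-(t * ‖y‖ ^ 2))) ξ‖ *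
          ‖iteratedFDeriv ℝ (m - i) h ξ‖ ≤
        (m.choose i : ℝ) * ((m.factorial : ℝ) * Real.exp (-(t * a ^ 2)) * D ^ m * M) := by
      intro i hi
      have hi' : i ≤ m := Nat.lt_succ_iff.mp (Finset.mem_range.mp hi)
      have g1 : ‖iteratedFDeriv ℝ i (fun y : E => Real.exp (-(t * ‖y‖ ^ 2))) ξ‖ ≤
          (m.factorial : ℝ) * Real.exp (-(t * a ^ 2)) * D ^ m := by
        refine (gauss_bound ht i hbξ (fun j hj => normsq_deriv_bound ht hbξ j hj)).trans ?_
        have f1 : (i.factorial : ℝ) ≤ (m.factorial : ℝ) := by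
          exact_mod_cast Nat.factorial_le hi'
        have f3 : D ^ i ≤ D ^ m := pow_le_pow_right₀ hD1 hi'
        apply mul_le_mul (mul_le_mul f1 hX (Real.exp_pos _).le (by positivity)) f3
          (by positivity) (by positivity)
      rw [mul_assoc]
      apply mul_le_mul_of_nonneg_left _ (Nat.cast_nonneg _)
      have g2 : ‖iteratedFDeriv ℝ (m - i) h ξ‖ ≤ M := hMle (m - i) (by omega) ξ
      calc ‖iteratedFDeriv ℝ i (fun y : E => Real.exp (-(t * ‖y‖ ^ 2))) ξ‖ *
            ‖iteratedFDeriv ℝ (m - i) h ξ‖ ≤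
          ((m.factorial : ℝ) * Real.exp (-(t * a ^ 2)) * D ^ m) * M :=
            mul_le_mul g1 g2 (norm_nonneg _) (by positivity)
        _ = (m.factorial : ℝ) * Real.exp (-(t * a ^ 2)) * D ^ m * M := rfl
    calc ‖ξ‖ ^ k * ‖iteratedFDeriv ℝ m (fun y : E => Real.exp (-(t * ‖y‖ ^ 2)) • h y) ξ‖ ≤
        (max 1 b) ^ k * ∑ i ∈ Finset.range (m + 1), (m.choose i : ℝ) *
          ‖iteratedFDeriv ℝ i (fun y : E => Real.exp (-(t * ‖y‖ ^ 2))) ξ‖ *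
          ‖iteratedFDeriv ℝ (m - i) h ξ‖ := by
          apply mul_le_mul (pow_le_pow_left₀ (norm_nonneg _) (hbξ.trans (le_max_right 1 b)) k)
            hsmul (norm_nonneg _) (by positivity)
      _ ≤ (max 1 b) ^ k * ∑ i ∈ Finset.range (m + 1), (m.choose i : ℝ) *
            ((m.factorial : ℝ) * Real.exp (-(t * a ^ 2)) * D ^ m * M) := by
          apply mul_le_mul_of_nonneg_left (Finset.sum_le_sum hterm) (by positivity)
      _ = (max 1 b) ^ k * (2 ^ m * ((m.factorial : ℝ) * Real.exp (-(t * a ^ 2)) * D ^ m * M)) := by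
          rw [← Finset.sum_mul]
          have hch : (∑ i ∈ Finset.range (m + 1), (m.choose i : ℝ)) = 2 ^ m := by
            exact_mod_cast Nat.sum_range_choose m
          rw [hch]
      _ ≤ (max 1 b) ^ k * (2 ^ m * ((m.factorial : ℝ) * Real.exp (-(t * a ^ 2)) *
            (K * Real.exp (a ^ 2 / 2 * t)) * M)) := by
          have hDm0 : (0:ℝ) ≤ D ^ m := by positivity
          gcongr
      _ = C₀ * Real.exp (-(a ^ 2 / 2 * t)) := by
          have e : Real.exp (-(t * a ^ 2)) * Real.exp (a ^ 2 / 2 * t) =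
              Real.exp (-(a ^ 2 / 2 * t)) := by
            rw [← Real.exp_add]; congr 1; ring
          rw [hC₀def, ← e]; ring
      _ ≤ (C₀ + 1) * Real.exp (-(a ^ 2 / 2 * t)) := by
          nlinarith [Real.exp_pos (-(a ^ 2 / 2 * t))]
  · have hz : iteratedFDeriv ℝ m (fun y : E => Real.exp (-(t * ‖y‖ ^ 2)) • h y) ξ = 0 := by
      apply image_eq_zero_of_notMem_tsupport
      intro hmem
      apply hξ
      have h1 : tsupport (iteratedFDeriv ℝ m (fun y : E => Real.exp (-(t * ‖y‖ ^ 2)) • h y)) ⊆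
          tsupport (fun y : E => Real.exp (-(t * ‖y‖ ^ 2)) • h y) :=
        tsupport_iteratedFDeriv_subset m
      have h2 : tsupport (fun y : E => Real.exp (-(t * ‖y‖ ^ 2)) • h y) ⊆ tsupport h := by
        apply closure_minimal _ (isClosed_tsupport h)
        intro y hy
        apply subset_closure
        intro hy0
        apply hy
        simp [hy0]
      exact h2 (h1 hmem)
    rw [hz]
    simp only [norm_zero, mul_zero]
    positivity


lemma decay_of_compactSupport {E F : Type*} [NormedAddCommGroup E] [NormedSpace ℝ E]
    [NormedAddCommGroup F] [NormedSpace ℝ F]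
    {f : E → F} (hf : ContDiff ℝ ∞ f) (hsupp : HasCompactSupport f) (k m : ℕ) :
    ∃ C : ℝ, ∀ x, ‖x‖ ^ k * ‖iteratedFDeriv ℝ m f x‖ ≤ C := by
  obtain ⟨R, hR⟩ := hsupp.isBounded.subset_closedBall (0 : E)
  obtain ⟨Mb, hMb⟩ := (hsupp.iteratedFDeriv m).exists_bound_of_continuous
    (hf.continuous_iteratedFDeriv (by exact_mod_cast le_top))
  refine ⟨(max R 0) ^ k * (max Mb 0), fun x => ?_⟩
  by_cases hx : x ∈ tsupport f
  · have h1 : ‖x‖ ≤ max R 0 := le_max_of_le_left (by simpa using mem_closedBall_zero_iff.mp (hR hx))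
    have h2 : ‖iteratedFDeriv ℝ m f x‖ ≤ max Mb 0 := le_max_of_le_left (hMb x)
    exact mul_le_mul (pow_le_pow_left₀ (norm_nonneg _) h1 k) h2 (norm_nonneg _) (by positivity)
  · have : iteratedFDeriv ℝ m f x = 0 := by
      apply image_eq_zero_of_notMem_tsupport
      exact fun hmem => hx (tsupport_iteratedFDeriv_subset m hmem)
    rw [this]
    simp only [norm_zero, mul_zero]
    positivity

/-- Lemma 4.1 (second set of estimates): the operator
`e^{tΔ} ∂_{x_l} ∂_{x_{l'}} ∂_{x_{l''}} (-Δ)^{-1}`, realized as the Fourier multiplier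
`e^{-t‖ξ‖²} ξ_l ξ_{l'} ξ_{l''} / ‖ξ‖²`, applied to a frequency-annulus-localized Schwartz
function decays exponentially in time and polynomially in space of any order `N`. -/
theorem heat_riesz_annulus_decay (n : ℕ) (hn : 1 ≤ n) (a b : ℝ) (ha : 0 < a) (hab : a < b)
    (N : ℕ) (l l' l'' : Fin n) (ψ : SchwartzMap (EuclideanSpace ℝ (Fin n)) ℂ)
    (hsupp : ∀ ξ : EuclideanSpace ℝ (Fin n), (‖ξ‖ < a ∨ b < ‖ξ‖) →
      VectorFourier.fourierIntegral Real.fourierChar volume (innerₗ (EuclideanSpace ℝ (Fin n))) (⇑ψ) ξ = 0) :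
    ∃ C c : ℝ, 0 < C ∧ 0 < c ∧
      ∀ t : ℝ, 0 ≤ t → ∀ x : EuclideanSpace ℝ (Fin n),
        ‖∫ ξ : EuclideanSpace ℝ (Fin n),
            Real.exp (-(t * ‖ξ‖ ^ 2)) •
              (((ξ l * ξ l' * ξ l'' / ‖ξ‖ ^ 2 : ℝ) : ℂ) *
                VectorFourier.fourierIntegral Real.fourierChar volume (innerₗ (EuclideanSpace ℝ (Fin n))) (⇑ψ) ξ *
                Complex.exp (2 * (Real.pi : ℂ) * Complex.I * ((inner ℝ x ξ : ℝ) : ℂ)))‖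
          ≤ C * Real.exp (-(c * t)) * (1 + ‖x‖) ^ (-(N : ℝ)) := by
  classical
  set Fψ : SchwartzMap (EuclideanSpace ℝ (Fin n)) ℂ := SchwartzMap.fourierTransformCLM ℝ ψ
    with hFψdef
  have hFψ : ∀ ξ, Fψ ξ = VectorFourier.fourierIntegral Real.fourierChar volume (innerₗ (EuclideanSpace ℝ (Fin n))) (⇑ψ) ξ := fun ξ => by
    rfl
  set h : EuclideanSpace ℝ (Fin n) → ℂ :=
    fun ξ => ((ξ l * ξ l' * ξ l'' / ‖ξ‖ ^ 2 : ℝ) : ℂ) * Fψ ξ with hdef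
  have hzero : ∀ ξ, (‖ξ‖ < a ∨ b < ‖ξ‖) → h ξ = 0 := by
    intro ξ hξ
    rw [hdef]
    simp only [hFψ, hsupp ξ hξ, mul_zero]
  have hsmooth : ContDiff ℝ ∞ h := by
    rw [contDiff_iff_contDiffAt]
    intro ξ₀
    by_cases hξ₀ : ‖ξ₀‖ < a
    · have hopen : IsOpen {x : EuclideanSpace ℝ (Fin n) | ‖x‖ < a} :=
        isOpen_lt continuous_norm continuous_const
      have hev : h =ᶠ[nhds ξ₀] (fun _ => 0) :=
        Filter.eventuallyEq_of_mem (hopen.mem_nhds hξ₀) (fun x hx => hzero x (Or.inl hx))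
      exact (contDiffAt_const (c := (0:ℂ))).congr_of_eventuallyEq hev
    · have hns : ‖ξ₀‖ ^ 2 ≠ 0 := by
        have : (0:ℝ) < ‖ξ₀‖ := lt_of_lt_of_le ha (not_lt.mp hξ₀)
        positivity
      have hproj : ∀ i : Fin n, ContDiff ℝ ∞ (fun ξ : EuclideanSpace ℝ (Fin n) => ξ i) :=
        fun i => (EuclideanSpace.proj (𝕜 := ℝ) i).contDiff
      have hdiv : ContDiffAt ℝ ∞
          (fun ξ : EuclideanSpace ℝ (Fin n) => (ξ l * ξ l' * ξ l'' / ‖ξ‖ ^ 2 : ℝ)) ξ₀ :=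
        ContDiffAt.div (((hproj l).mul (hproj l')).mul (hproj l'')).contDiffAt
          (contDiff_norm_sq ℝ).contDiffAt hns
      have hre : ContDiffAt ℝ ∞
          (fun ξ : EuclideanSpace ℝ (Fin n) => ((ξ l * ξ l' * ξ l'' / ‖ξ‖ ^ 2 : ℝ) : ℂ)) ξ₀ :=
        Complex.ofRealCLM.contDiff.contDiffAt.comp ξ₀ hdiv
      exact hre.mul (Fψ.smooth ⊤).contDiffAt
  have htsupp : ∀ ξ, ξ ∈ tsupport h → a ≤ ‖ξ‖ ∧ ‖ξ‖ ≤ b := by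
    intro ξ hξ
    have hclosed : IsClosed {x : EuclideanSpace ℝ (Fin n) | a ≤ ‖x‖ ∧ ‖x‖ ≤ b} :=
      IsClosed.inter (isClosed_le continuous_const continuous_norm)
        (isClosed_le continuous_norm continuous_const)
    have hsub : Function.support h ⊆ {x | a ≤ ‖x‖ ∧ ‖x‖ ≤ b} := by
      intro x hx
      by_contra hc
      rcases not_and_or.mp hc with hc | hc
      · exact hx (hzero x (Or.inl (not_le.mp hc)))
      · exact hx (hzero x (Or.inr (not_le.mp hc)))
    exact closure_minimal hsub hclosed hξ
  have hCS : HasCompactSupport h := by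
    refine IsCompact.of_isClosed_subset (isCompact_closedBall (0 : EuclideanSpace ℝ (Fin n)) b)
      isClosed_closure ?_
    intro x hx
    exact mem_closedBall_zero_iff.mpr (htsupp x hx).2
  have hM : ∀ j : ℕ, ∃ M : ℝ, 0 ≤ M ∧ ∀ ξ, ‖iteratedFDeriv ℝ j h ξ‖ ≤ M := by
    intro j
    obtain ⟨C, hC⟩ := decay_of_compactSupport hsmooth hCS 0 j
    refine ⟨max C 0, le_max_right _ _, fun ξ => ?_⟩
    have := hC ξ
    rw [pow_zero, one_mul] at this
    exact this.trans (le_max_left _ _)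
  have hgsmooth : ∀ t : ℝ,
      ContDiff ℝ ∞ (fun ξ : EuclideanSpace ℝ (Fin n) => Real.exp (-(t * ‖ξ‖ ^ 2)) • h ξ) :=
    fun t => (Real.contDiff_exp.comp (contDiff_const.mul (contDiff_norm_sq ℝ)).neg).smul hsmooth
  have hgCS : ∀ t : ℝ,
      HasCompactSupport (fun ξ : EuclideanSpace ℝ (Fin n) => Real.exp (-(t * ‖ξ‖ ^ 2)) • h ξ) := by
    intro t
    refine IsCompact.of_isClosed_subset hCS isClosed_closure ?_
    refine closure_minimal ?_ (isClosed_tsupport h)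
    intro x hx
    apply subset_closure
    intro h0
    apply hx
    simp [h0]
  set G : ℝ → SchwartzMap (EuclideanSpace ℝ (Fin n)) ℂ := fun t =>
    { toFun := fun ξ => Real.exp (-(t * ‖ξ‖ ^ 2)) • h ξ
      smooth' := hgsmooth t
      decay' := fun k m => decay_of_compactSupport (hgsmooth t) (hgCS t) k m } with hGdef
  have key : ∀ p : ℕ × ℕ, ∃ K : ℝ, 0 < K ∧ ∀ t : ℝ, 0 ≤ t →
      SchwartzMap.seminorm ℝ p.1 p.2 (G t) ≤ K * Real.exp (-(a ^ 2 / 2 * t)) := by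
    intro p
    obtain ⟨C, hC0, hC⟩ := key_seminorm_bound hsmooth ha hab.le htsupp hM p.1 p.2
    exact ⟨C, hC0, fun t ht => SchwartzMap.seminorm_le_bound ℝ p.1 p.2 (G t)
      (by positivity) (fun ξ => hC t ht ξ)⟩
  have fourier_bound : ∀ i : ℕ × ℕ, ∃ (s : Finset (ℕ × ℕ)) (Ci : ℝ), 0 < Ci ∧
      ∀ u : SchwartzMap (EuclideanSpace ℝ (Fin n)) ℂ,
        schwartzSeminormFamily ℝ (EuclideanSpace ℝ (Fin n)) ℂ i
            (SchwartzMap.fourierTransformCLM ℝ u) ≤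
          Ci * ∑ j ∈ s, schwartzSeminormFamily ℝ (EuclideanSpace ℝ (Fin n)) ℂ j u := by
    intro i
    set L := SchwartzMap.fourierTransformCLM ℝ
      (V := EuclideanSpace ℝ (Fin n)) (E := ℂ) with hLdef
    set q : Seminorm ℝ (SchwartzMap (EuclideanSpace ℝ (Fin n)) ℂ) :=
      (schwartzSeminormFamily ℝ (EuclideanSpace ℝ (Fin n)) ℂ i).comp
        (L.toLinearMap) with hqdef
    have hq : Continuous q := by
      have h1 : Continuous (schwartzSeminormFamily ℝ (EuclideanSpace ℝ (Fin n)) ℂ i) :=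
        (schwartz_withSeminorms ℝ (EuclideanSpace ℝ (Fin n)) ℂ).continuous_seminorm i
      exact h1.comp L.continuous
    obtain ⟨s, Cnn, hCnn, hle⟩ := Seminorm.bound_of_continuous
      (schwartz_withSeminorms ℝ (EuclideanSpace ℝ (Fin n)) ℂ) q hq
    refine ⟨s, (Cnn : ℝ), by positivity, fun u => ?_⟩
    have h1 : q u ≤ (Cnn : ℝ) *
        (s.sup (schwartzSeminormFamily ℝ (EuclideanSpace ℝ (Fin n)) ℂ)) u := by
      have := hle u
      simpa [NNReal.smul_def, smul_eq_mul] using this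
    have h2 : (s.sup (schwartzSeminormFamily ℝ (EuclideanSpace ℝ (Fin n)) ℂ)) u ≤
        ∑ j ∈ s, schwartzSeminormFamily ℝ (EuclideanSpace ℝ (Fin n)) ℂ j u := by
      apply Seminorm.finset_sup_apply_le (Finset.sum_nonneg fun j _ => apply_nonneg _ _)
      intro j hj
      exact Finset.single_le_sum (fun j _ => apply_nonneg _ u) hj
    calc schwartzSeminormFamily ℝ (EuclideanSpace ℝ (Fin n)) ℂ i (L u) = q u := rfl
      _ ≤ (Cnn : ℝ) * (s.sup (schwartzSeminormFamily ℝ (EuclideanSpace ℝ (Fin n)) ℂ)) u := h1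
      _ ≤ (Cnn : ℝ) * ∑ j ∈ s, schwartzSeminormFamily ℝ (EuclideanSpace ℝ (Fin n)) ℂ j u := by
          apply mul_le_mul_of_nonneg_left h2 (by positivity)
  choose sf Cf hCf0 hCf using fourier_bound
  choose Kf hKf0 hKf using key
  set A : ℝ := ∑ i ∈ Finset.Iic ((N, 0) : ℕ × ℕ), Cf i * ∑ j ∈ sf i, Kf j with hAdef
  have hA0 : 0 ≤ A := Finset.sum_nonneg fun i _ =>
    mul_nonneg (hCf0 i).le (Finset.sum_nonneg fun j _ => (hKf0 j).le)
  refine ⟨2 ^ N * A + 1, a ^ 2 / 2, by positivity, by positivity, fun t ht x => ?_⟩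
  set FT : SchwartzMap (EuclideanSpace ℝ (Fin n)) ℂ :=
    SchwartzMap.fourierTransformCLM ℝ (G t) with hFTdef
  have he : (0:ℝ) < Real.exp (-(a ^ 2 / 2 * t)) := Real.exp_pos _
  have hFT : ∀ i ∈ Finset.Iic ((N, 0) : ℕ × ℕ),
      schwartzSeminormFamily ℝ (EuclideanSpace ℝ (Fin n)) ℂ i FT ≤
        A * Real.exp (-(a ^ 2 / 2 * t)) := by
    intro i hi
    calc schwartzSeminormFamily ℝ (EuclideanSpace ℝ (Fin n)) ℂ i FT ≤
        Cf i * ∑ j ∈ sf i, schwartzSeminormFamily ℝ (EuclideanSpace ℝ (Fin n)) ℂ j (G t) :=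
          hCf i (G t)
      _ ≤ Cf i * ∑ j ∈ sf i, Kf j * Real.exp (-(a ^ 2 / 2 * t)) := by
          apply mul_le_mul_of_nonneg_left _ (hCf0 i).le
          apply Finset.sum_le_sum
          intro j hj
          have : schwartzSeminormFamily ℝ (EuclideanSpace ℝ (Fin n)) ℂ j (G t) =
              SchwartzMap.seminorm ℝ j.1 j.2 (G t) := by
            rcases j with ⟨j1, j2⟩
            rfl
          rw [this]
          exact hKf j t ht
      _ = (Cf i * ∑ j ∈ sf i, Kf j) * Real.exp (-(a ^ 2 / 2 * t)) := by
          rw [← Finset.sum_mul]; ring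
      _ ≤ A * Real.exp (-(a ^ 2 / 2 * t)) := by
          apply mul_le_mul_of_nonneg_right _ he.le
          exact Finset.single_le_sum (f := fun i => Cf i * ∑ j ∈ sf i, Kf j)
            (fun i _ => mul_nonneg (hCf0 i).le
              (Finset.sum_nonneg fun j _ => (hKf0 j).le)) hi
  have hsup : (Finset.Iic ((N, 0) : ℕ × ℕ)).sup
      (schwartzSeminormFamily ℝ (EuclideanSpace ℝ (Fin n)) ℂ) FT ≤
        A * Real.exp (-(a ^ 2 / 2 * t)) :=
    Seminorm.finset_sup_apply_le (by positivity) hFT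
  have hpoint := SchwartzMap.one_add_le_sup_seminorm_apply (𝕜 := ℝ)
    (m := ((N, 0) : ℕ × ℕ)) le_rfl le_rfl FT (-x)
  rw [norm_iteratedFDeriv_zero, norm_neg] at hpoint
  have hpoint2 : (1 + ‖x‖) ^ N * ‖FT (-x)‖ ≤
      2 ^ N * (A * Real.exp (-(a ^ 2 / 2 * t))) := by
    refine hpoint.trans ?_
    apply mul_le_mul_of_nonneg_left hsup (by positivity)
  -- identify the integral with the Fourier transform of `G t` at `-x`
  have hint : (∫ ξ : EuclideanSpace ℝ (Fin n),
      Real.exp (-(t * ‖ξ‖ ^ 2)) •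
        (((ξ l * ξ l' * ξ l'' / ‖ξ‖ ^ 2 : ℝ) : ℂ) *
          VectorFourier.fourierIntegral Real.fourierChar volume (innerₗ (EuclideanSpace ℝ (Fin n))) (⇑ψ) ξ *
          Complex.exp (2 * (Real.pi : ℂ) * Complex.I * ((inner ℝ x ξ : ℝ) : ℂ)))) =
      FT (-x) := by
    have hcoe : FT (-x) = 𝓕 (⇑(G t)) (-x) := by
      rfl
    rw [hcoe, Real.fourier_eq]
    congr 1
    funext ξ
    have hG : (G t) ξ = Real.exp (-(t * ‖ξ‖ ^ 2)) • h ξ := rfl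
    rw [hG, hdef]
    simp only [hFψ, Circle.smul_def, Real.fourierChar_apply, inner_neg_right, neg_neg,
      smul_eq_mul, Complex.real_smul, Complex.ofReal_exp]
    rw [real_inner_comm ξ x]
    push_cast
    ring
  rw [hint]
  have h1x : (0:ℝ) < 1 + ‖x‖ := by positivity
  have hrpow : ((1:ℝ) + ‖x‖) ^ (-(N:ℝ)) = ((1 + ‖x‖) ^ N)⁻¹ := by
    rw [Real.rpow_neg h1x.le, Real.rpow_natCast]
  rw [hrpow]
  have hfinal : ‖FT (-x)‖ * (1 + ‖x‖) ^ N ≤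
      (2 ^ N * A + 1) * Real.exp (-(a ^ 2 / 2 * t)) := by
    calc ‖FT (-x)‖ * (1 + ‖x‖) ^ N = (1 + ‖x‖) ^ N * ‖FT (-x)‖ := mul_comm _ _
      _ ≤ 2 ^ N * (A * Real.exp (-(a ^ 2 / 2 * t))) := hpoint2
      _ ≤ (2 ^ N * A + 1) * Real.exp (-(a ^ 2 / 2 * t)) := by nlinarith [he]
  calc ‖FT (-x)‖ ≤ ((2 ^ N * A + 1) * Real.exp (-(a ^ 2 / 2 * t))) / (1 + ‖x‖) ^ N :=
        (le_div_iff₀ (by positivity)).mpr hfinal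
    _ = (2 ^ N * A + 1) * Real.exp (-(a ^ 2 / 2 * t)) * ((1 + ‖x‖) ^ N)⁻¹ := by
        rw [div_eq_mul_inv]
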